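/- arXiv:1107.3614 — 3 statements merged into one kernel-verified Lean document; each statement's English description precedes it below -/
import Mathlib

section
/- Let K be a field and P in K[X] a polynomial of degree n ≥ 1. P is irreducible over K if and only if P has no root in any field extension L of K with [L : K] ≤ n/2. -/
open Polynomial

theorem stmt_6 (K : Type) [Field K] (P : K[X]) (n : ℕ) (hn : P.natDegree = n)
    (h1 : 1 ≤ n) :
    Irreducible P ↔
      ∀ (L : Type) (_ : Field L) (_ : Algebra K L), Module.Finite K L →
        2 * Module.finrank K L ≤ n → ∀ x : L, aeval x P ≠ 0 := by
  have hP0 : P ≠ 0 := fun h => by simp [h] at hn; omega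
  constructor
  · intro hirr L _ _ hfin hle x hx
    have hint : IsIntegral K x := Algebra.IsIntegral.isIntegral x
    have hdvd : minpoly K x ∣ P := minpoly.dvd K x hx
    have hminirr : Irreducible (minpoly K x) := minpoly.irreducible hint
    have hassoc : Associated (minpoly K x) P := hminirr.associated_of_dvd hirr hdvd
    have hdeg : (minpoly K x).natDegree = n := by
      obtain ⟨u, hu⟩ := hassoc
      rw [← hn, ← hu, natDegree_mul (minpoly.ne_zero hint) u.ne_zero,
        natDegree_eq_zero_of_isUnit u.isUnit, add_zero]
    have hle2 : (minpoly K x).natDegree ≤ Module.finrank K L :=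
      minpoly.natDegree_le x
    omega
  · intro h
    by_contra hni
    have hPu : ¬IsUnit P := by
      intro hu
      have := natDegree_eq_zero_of_isUnit hu
      omega
    rw [irreducible_iff] at hni
    push_neg at hni
    obtain ⟨a, b, hab, ha, hb⟩ := hni hPu
    have ha0 : a ≠ 0 := fun hz => hP0 (by simp [hab, hz])
    have hb0 : b ≠ 0 := fun hz => hP0 (by simp [hab, hz])
    have key : ∀ p : K[X], p ≠ 0 → ¬IsUnit p → 1 ≤ p.natDegree := by
      intro p hp hu
      rcases Nat.eq_zero_or_pos p.natDegree with h0 | h0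
      · exact absurd (isUnit_iff_degree_eq_zero.mpr
          ((degree_eq_natDegree hp).trans (by simp [h0]))) hu
      · exact h0
    have hadeg := key a ha0 ha
    have hbdeg := key b hb0 hb
    have hsum : a.natDegree + b.natDegree = n := by
      rw [← hn, hab, natDegree_mul ha0 hb0]
    -- choose the smaller factor
    obtain ⟨c, hc0, hcu, hcle⟩ : ∃ c : K[X], c ≠ 0 ∧ ¬IsUnit c ∧
        2 * c.natDegree ≤ n ∧ c ∣ P := by
      rcases le_total a.natDegree b.natDegree with hle | hle
      · exact ⟨a, ha0, ha, by omega, ⟨b, hab⟩⟩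
      · exact ⟨b, hb0, hb, by omega, ⟨a, by rw [hab, mul_comm]⟩⟩
    obtain ⟨hcle, hcdvd⟩ := hcle
    obtain ⟨q, hqirr, hqc⟩ := WfDvdMonoid.exists_irreducible_factor hcu hc0
    have hqP : q ∣ P := hqc.trans hcdvd
    have hqdeg : q.natDegree ≤ c.natDegree := natDegree_le_of_dvd hqc hc0
    haveI : Fact (Irreducible q) := ⟨hqirr⟩
    haveI : Module.Finite K (AdjoinRoot q) :=
      Module.Finite.of_basis (AdjoinRoot.powerBasis hqirr.ne_zero).basis
    have hfr : Module.finrank K (AdjoinRoot q) = q.natDegree := by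
      rw [(AdjoinRoot.powerBasis hqirr.ne_zero).finrank, AdjoinRoot.powerBasis_dim]
    refine h (AdjoinRoot q) inferInstance inferInstance inferInstance
      (by omega) (AdjoinRoot.root q) ?_
    obtain ⟨r, rfl⟩ := hqP
    have : (aeval (AdjoinRoot.root q)) q = 0 := by
      rw [aeval_def]; exact AdjoinRoot.eval₂_root q
    rw [map_mul, this, zero_mul]
end

section
/- Let n be a nonzero even integer, q = 2^(n/2), and c in F_{2^n} with c^(q+1) = 1. Then (1/c^(2^(n-1)))^q = c / c^(2^(n-1)), and for every ω in F_{2^n}, the element (ω + c·ω^q) / c^(2^(n-1)) lies in the subfield F_{2^(n/2)}. -/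
theorem stmt_11 (n : ℕ) (hn : n ≠ 0) (hev : Even n) [Fact (Nat.Prime 2)]
    (q : ℕ) (hq : q = 2 ^ (n / 2)) (c : GaloisField 2 n) (hc : c ^ (q + 1) = 1) :
    (1 / c ^ 2 ^ (n - 1)) ^ q = c / c ^ 2 ^ (n - 1) ∧
      ∀ ω : GaloisField 2 n,
        ((ω + c * ω ^ q) / c ^ 2 ^ (n - 1)) ^ q
          = (ω + c * ω ^ q) / c ^ 2 ^ (n - 1) := by
  have hc0 : c ≠ 0 := by
    intro h; rw [h] at hc; simp at hc
  have hcard := GaloisField.card 2 n hn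
  have hpc : ∀ x : GaloisField 2 n, x ^ (2 ^ n) = x := by
    have : Fintype (GaloisField 2 n) := Fintype.ofFinite _
    intro x
    have h := FiniteField.pow_card x
    rwa [← Nat.card_eq_fintype_card, hcard] at h
  set s := c ^ 2 ^ (n - 1) with hsdef
  have hs0 : s ≠ 0 := pow_ne_zero _ hc0
  have hs2 : s ^ 2 = c := by
    rw [hsdef, ← pow_mul, ← pow_succ]
    have h1 : n - 1 + 1 = n := by omega
    rw [h1, hpc]
  have hqq : q * q = 2 ^ n := by
    subst hq
    rw [← pow_add]
    congr 1
    have := Nat.even_iff.mp hev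
    omega
  have hinj : ∀ a b : GaloisField 2 n, a ^ 2 = b ^ 2 → a = b := by
    intro a b h
    apply frobenius_inj (GaloisField 2 n) 2
    rwa [frobenius_def, frobenius_def]
  have hcq : c ^ q * c = 1 := by rw [← pow_succ]; exact hc
  have hsq : s ^ q * c = s := by
    apply hinj
    have h3 : (s ^ q * c) ^ 2 = c ^ q * c * c := by
      rw [mul_pow, ← pow_mul, mul_comm q 2, pow_mul, hs2]; ring
    rw [h3, hcq, one_mul, hs2]
  clear_value s
  constructor
  · rw [div_pow, one_pow, div_eq_div_iff (pow_ne_zero _ hs0) hs0, one_mul, mul_comm]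
    exact hsq.symm
  · intro ω
    have hnum : (ω + c * ω ^ q) ^ q = ω ^ q + c ^ q * ω := by
      have h2 : (ω + c * ω ^ q) ^ q = ω ^ q + (c * ω ^ q) ^ q := by
        rw [hq, add_pow_char_pow]
      rw [h2, mul_pow, ← pow_mul, hqq, hpc]
    rw [div_pow, hnum, div_eq_div_iff (pow_ne_zero _ hs0) hs0]
    linear_combination (-(ω ^ q + c ^ q * ω)) * hsq + s ^ q * ω * hcq
end

section
/- Let n be an even positive integer and i an integer with gcd(i, n/2) = 1. Then gcd(2^i + 1, 2^(n/2) + 1) equals 1 if i is even, equals 1 if i is odd and n/2 is even, and equals 3 if i is odd and n/2 is odd. -/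
lemma aux_dvd (k : ℕ) : (2 ^ k + 1) ∣ (2 ^ (2 * k) - 1) := by
  have h1 : 1 ≤ 2 ^ k := Nat.one_le_two_pow
  cases' Nat.exists_eq_add_of_le h1 with c hc
  have : 2 ^ (2 * k) - 1 = (2 ^ k + 1) * (2 ^ k - 1) := by
    have h2 : 2 ^ (2 * k) = 2 ^ k * 2 ^ k := by rw [two_mul, pow_add]
    rw [h2, hc]
    have e : 1 + c - 1 = c := by omega
    rw [e]
    have e2 : (1 + c) * (1 + c) = (1 + c + 1) * c + 1 := by ring
    omega
  rw [this]; exact Dvd.intro _ rfl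

lemma aux_mod3 (k : ℕ) : (2 ^ k + 1) % 3 = if Even k then 2 else 0 := by
  induction k with
  | zero => simp
  | succ n ih =>
    have h1 : 1 ≤ 2 ^ n := Nat.one_le_two_pow
    rcases Nat.even_or_odd n with he | ho
    · simp [he] at ih
      simp [Nat.even_add_one, he, pow_succ]
      omega
    · simp [Nat.not_even_iff_odd.mpr ho] at ih
      simp [Nat.even_add_one, Nat.not_even_iff_odd.mpr ho, pow_succ]
      omega

theorem stmt_16 (n : ℕ) (hn : 0 < n) (hev : Even n) (i : ℕ)
    (h : Nat.gcd i (n / 2) = 1) :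
    (Even i → Nat.gcd (2 ^ i + 1) (2 ^ (n / 2) + 1) = 1) ∧
    (Odd i → Even (n / 2) → Nat.gcd (2 ^ i + 1) (2 ^ (n / 2) + 1) = 1) ∧
    (Odd i → Odd (n / 2) → Nat.gcd (2 ^ i + 1) (2 ^ (n / 2) + 1) = 3) := by
  set m := n / 2 with hm
  set d := Nat.gcd (2 ^ i + 1) (2 ^ m + 1) with hd
  have hdpos : 0 < d := Nat.gcd_pos_of_pos_left _ (by positivity)
  -- d divides 3
  have hd3 : d ∣ 3 := by
    have h1 : d ∣ 2 ^ (2 * i) - 1 :=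
      (Nat.gcd_dvd_left _ _).trans (aux_dvd i)
    have h2 : d ∣ 2 ^ (2 * m) - 1 :=
      (Nat.gcd_dvd_right _ _).trans (aux_dvd m)
    haveI : NeZero d := ⟨hdpos.ne'⟩
    have e1 : (2 : ZMod d) ^ (2 * i) = 1 := by
      have hc : ((2 ^ (2 * i) - 1 : ℕ) : ZMod d) = 0 :=
        (ZMod.natCast_eq_zero_iff _ _).mpr h1
      have hle : 1 ≤ 2 ^ (2 * i) := Nat.one_le_two_pow
      have : ((2 ^ (2 * i) : ℕ) : ZMod d) = ((1 : ℕ) : ZMod d) := by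
        rw [Nat.cast_sub hle] at hc
        linear_combination hc
      simpa using this
    have e2 : (2 : ZMod d) ^ (2 * m) = 1 := by
      have hc : ((2 ^ (2 * m) - 1 : ℕ) : ZMod d) = 0 :=
        (ZMod.natCast_eq_zero_iff _ _).mpr h2
      have hle : 1 ≤ 2 ^ (2 * m) := Nat.one_le_two_pow
      have : ((2 ^ (2 * m) : ℕ) : ZMod d) = ((1 : ℕ) : ZMod d) := by
        rw [Nat.cast_sub hle] at hc
        linear_combination hc
      simpa using this
    have ho1 : orderOf (2 : ZMod d) ∣ 2 * i := orderOf_dvd_of_pow_eq_one e1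
    have ho2 : orderOf (2 : ZMod d) ∣ 2 * m := orderOf_dvd_of_pow_eq_one e2
    have hog : orderOf (2 : ZMod d) ∣ 2 := by
      have := Nat.dvd_gcd ho1 ho2
      rwa [Nat.gcd_mul_left, h, mul_one] at this
    have e3 : (2 : ZMod d) ^ 2 = 1 := orderOf_dvd_iff_pow_eq_one.mp hog
    have : ((3 : ℕ) : ZMod d) = 0 := by push_cast; linear_combination e3
    exact (ZMod.natCast_eq_zero_iff _ _).mp this
  have hd13 : d = 1 ∨ d = 3 := by
    have := Nat.le_of_dvd (by norm_num) hd3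
    interval_cases d <;> omega
  refine ⟨?_, ?_, ?_⟩
  · intro hi
    have h3 : ¬ (3 ∣ 2 ^ i + 1) := by
      have := aux_mod3 i
      rw [if_pos hi] at this
      omega
    rcases hd13 with h1 | h1
    · exact h1
    · exact absurd (h1 ▸ Nat.gcd_dvd_left _ _) h3
  · intro hi hme
    have h3 : ¬ (3 ∣ 2 ^ m + 1) := by
      have := aux_mod3 m
      rw [if_pos hme] at this
      omega
    rcases hd13 with h1 | h1
    · exact h1
    · exact absurd (h1 ▸ Nat.gcd_dvd_right _ _) h3
  · intro hi hmo
    have h3i : 3 ∣ 2 ^ i + 1 := by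
      have := aux_mod3 i
      rw [if_neg (Nat.not_even_iff_odd.mpr hi)] at this
      omega
    have h3m : 3 ∣ 2 ^ m + 1 := by
      have := aux_mod3 m
      rw [if_neg (Nat.not_even_iff_odd.mpr hmo)] at this
      omega
    have : 3 ∣ d := Nat.dvd_gcd h3i h3m
    exact Nat.dvd_antisymm hd3 this
end
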